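/- (Tchebichev's inequality) Let E be a Dedekind complete Riesz space with conditional expectation T and weak order unit e = Te. For f ∈ L²(T) with f ≥ 0 and real ε > 0, T P_{(f-εe)^+} e ≤ ε^{-2} T(f²), where P_{(f-εe)^+} is the band projection onto the band generated by (f-εe)^+. -/

import Mathlib

open Finset

/-- The universal completion `E^u` of a Dedekind complete Riesz space with weak
order unit `e`, carrying its canonical `f`-algebra structure with `e = 1` the
multiplicative unit and weak order unit. The Riesz space `E` itself is modeled
as a Riesz subspace of `A`. -/
class FRieszSpace (A : Type*) extends CommRing A, Lattice A, Module ℝ A where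
  add_le_add_left' : ∀ a b : A, a ≤ b → ∀ c : A, c + a ≤ c + b
  mul_nonneg' : ∀ a b : A, 0 ≤ a → 0 ≤ b → 0 ≤ a * b
  smul_nonneg' : ∀ (r : ℝ) (a : A), 0 ≤ r → 0 ≤ a → 0 ≤ r • a
  inf_mul_orth : ∀ a b c : A, 0 ≤ c → a ⊓ b = 0 → (a * c) ⊓ b = 0
  one_weak_unit : ∀ a : A, (a ⊔ -a) ⊓ 1 = 0 → a = 0

variable {A : Type*} [FRieszSpace A]

/-- `E` is Dedekind complete: every nonempty subset of `E` bounded above in `E`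
has a supremum in `E`. -/
def DedekindCompleteIn (E : Set A) : Prop :=
  ∀ S : Set A, S ⊆ E → S.Nonempty → (∃ b ∈ E, ∀ x ∈ S, x ≤ b) → ∃ a ∈ E, IsLUB S a

/-- A Riesz subspace of `A` containing the weak order unit `1`. -/
structure IsRieszSubspace (E : Set A) : Prop where
  zero_mem : (0:A) ∈ E
  add_mem : ∀ x y : A, x ∈ E → y ∈ E → x + y ∈ E
  smul_mem : ∀ (r : ℝ) (x : A), x ∈ E → r • x ∈ E
  abs_mem : ∀ x : A, x ∈ E → (x ⊔ -x) ∈ E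
  one_mem : (1:A) ∈ E

/-- A conditional expectation operator on `E`: a positive order continuous
linear projection fixing the weak order unit, with range a Riesz subspace. -/
structure IsCondExpOn (E : Set A) (T : A →ₗ[ℝ] A) : Prop where
  mapsTo : ∀ x ∈ E, T x ∈ E
  positive : ∀ x : A, 0 ≤ x → 0 ≤ T x
  projection : ∀ x : A, T (T x) = T x
  unit : T 1 = 1
  range_abs : ∀ x : A, ∃ y : A, T y = (T x) ⊔ (-(T x))
  orderCont : ∀ (S : Set A) (a : A), S.Nonempty → DirectedOn (· ≤ ·) S → IsLUB S a →
      IsLUB (T '' S) (T a)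

def StrictlyPositive (T : A →ₗ[ℝ] A) : Prop := ∀ x : A, 0 < x → 0 < T x

/-- `E` is `T`-universally complete: every upward directed set in `E₊` whose
image under `T` is order bounded in `A = E^u` has a supremum in `E`. -/
def TUniversallyComplete (E : Set A) (T : A →ₗ[ℝ] A) : Prop :=
  ∀ S : Set A, S ⊆ E → S.Nonempty → DirectedOn (· ≤ ·) S → (∀ x ∈ S, 0 ≤ x) →
    BddAbove (T '' S) → ∃ a ∈ E, IsLUB S a

/-- `L²(T) = {x ∈ E : x² ∈ E}` (squares taken in the `f`-algebra `A = E^u`). -/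
def L2 (E : Set A) : Set A := {x | x ∈ E ∧ x * x ∈ E}

/-- A band projection: an order projection `0 ≤ P ≤ I`, `P² = P`. -/
def IsBandProjection (P : A →ₗ[ℝ] A) : Prop :=
  (∀ x, P (P x) = P x) ∧ ∀ x : A, 0 ≤ x → 0 ≤ P x ∧ P x ≤ x

/-- `P` is the band projection onto the band generated by `u ≥ 0`:
`P x = sup_n (x ⊓ n u)` for `x ≥ 0`. -/
def IsBandProjOnto (P : A →ₗ[ℝ] A) (u : A) : Prop :=
  IsBandProjection P ∧ ∀ x : A, 0 ≤ x → IsLUB {y | ∃ n : ℕ, y = x ⊓ (n • u)} (P x)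

/-- The variance `var(x) = T (x - Tx)²`. -/
def variance (T : A →ₗ[ℝ] A) (x : A) : A := T ((x - T x) * (x - T x))

/-- `f` and `g` are `T`-conditionally independent: there are conditional
expectation operators `Tf`, `Tg` commuting with `T`, with `f`, resp. `g`, in
their ranges, satisfying `Tf ∘ Tg = T = Tg ∘ Tf`. -/
def AreTCondIndep (E : Set A) (T : A →ₗ[ℝ] A) (f g : A) : Prop :=
  ∃ Tf Tg : A →ₗ[ℝ] A, IsCondExpOn E Tf ∧ IsCondExpOn E Tg ∧
    Tf f = f ∧ Tg g = g ∧
    T.comp Tf = T ∧ Tf.comp T = T ∧ T.comp Tg = T ∧ Tg.comp T = T ∧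
    Tf.comp Tg = T ∧ Tg.comp Tf = T

/-- A family of band projections is `T`-conditionally independent: `T`
factorizes over products of the components `P i e` and `(I - P i) e`. -/
def IsTCondIndepProjFamily {ι : Type*} (T : A →ₗ[ℝ] A) (P : ι → A →ₗ[ℝ] A) : Prop :=
  ∀ (s : Finset ι) (c : ι → Bool),
    T (∏ i ∈ s, (if c i then P i 1 else 1 - P i 1)) =
      ∏ i ∈ s, T (if c i then P i 1 else 1 - P i 1)

/-- `e`-uniform convergence of a sequence. -/
def EUnifTendsTo (x : ℕ → A) (l : A) : Prop :=
  ∀ ε : ℝ, 0 < ε → ∃ N : ℕ, ∀ n ≥ N, |x n - l| ≤ ε • (1:A)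

/-- Order convergence of a sequence. -/
def OrderConvergesTo (x : ℕ → A) (l : A) : Prop :=
  ∃ d : ℕ → A, Antitone d ∧ IsGLB (Set.range d) 0 ∧ ∀ n, |x n - l| ≤ d n

/-- `h = e^{-g}` via the functional calculus on `E^e`: for every sequence of
polynomials converging uniformly to `t ↦ exp (-t)` on `[-1,1]`, the
evaluations at `g` converge `e`-uniformly to `h`. -/
def IsExpNeg (g h : A) : Prop :=
  ∀ (d : ℕ → ℕ) (a : ℕ → ℕ → ℝ),
    (∀ ε : ℝ, 0 < ε → ∃ N : ℕ, ∀ k ≥ N, ∀ t ∈ Set.Icc (-1:ℝ) 1,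
        |(∑ i ∈ Finset.range (d k), a k i * t ^ i) - Real.exp (-t)| ≤ ε) →
    EUnifTendsTo (fun k => ∑ i ∈ Finset.range (d k), a k i • g ^ i) h



section TchebAux

variable {A : Type*} [FRieszSpace A]

instance : AddLeftMono A :=
  ⟨fun c a b h => FRieszSpace.add_le_add_left' a b h c⟩

instance : AddRightMono A :=
  ⟨fun c a b h => by
    simpa [add_comm] using FRieszSpace.add_le_add_left' a b h c⟩

lemma fr_mul_nonneg {a b : A} (ha : 0 ≤ a) (hb : 0 ≤ b) : 0 ≤ a * b :=
  FRieszSpace.mul_nonneg' a b ha hb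

lemma fr_smul_nonneg {r : ℝ} {a : A} (hr : 0 ≤ r) (ha : 0 ≤ a) : 0 ≤ r • a :=
  FRieszSpace.smul_nonneg' r a hr ha

lemma fr_smul_mono {r : ℝ} (hr : 0 ≤ r) {a b : A} (h : a ≤ b) : r • a ≤ r • b := by
  have h0 : 0 ≤ r • (b - a) := fr_smul_nonneg hr (sub_nonneg.2 h)
  rw [smul_sub] at h0
  exact sub_nonneg.1 h0

lemma fr_smul_mono_scalar {r s : ℝ} (h : r ≤ s) {a : A} (ha : 0 ≤ a) : r • a ≤ s • a := by
  have h0 : 0 ≤ (s - r) • a := fr_smul_nonneg (sub_nonneg.2 h) ha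
  rw [sub_smul] at h0
  exact sub_nonneg.1 h0

lemma fr_mul_mono {x a b : A} (hx : 0 ≤ x) (h : a ≤ b) : x * a ≤ x * b := by
  have h0 : 0 ≤ x * (b - a) := fr_mul_nonneg hx (sub_nonneg.2 h)
  rw [mul_sub] at h0
  exact sub_nonneg.1 h0

lemma fr_one_nonneg : (0 : A) ≤ 1 := by
  set p : A := posPart 1 with hp
  set n : A := negPart 1 with hn
  have hn0 : (0 : A) ≤ n := negPart_nonneg 1
  have hpn : p ⊓ n = 0 := posPart_inf_negPart_eq_zero (1 : A)
  have h1 : (p * n) ⊓ n = 0 := FRieszSpace.inf_mul_orth p n n hn0 hpn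
  have hps : p - n = 1 := posPart_sub_negPart (1 : A)
  have h2 : n ≤ p * n := by
    have hpe : p = 1 + n := by rw [← hps]; ring
    have : p * n = n + n * n := by rw [hpe]; ring
    rw [this]
    exact le_add_of_nonneg_right (fr_mul_nonneg hn0 hn0)
  have hnz : n = 0 := by
    have := inf_eq_right.2 h2
    rw [h1] at this
    exact this.symm
  have : (1 : A) = p := by rw [← hps, hnz, sub_zero]
  rw [this]
  exact posPart_nonneg 1

lemma fr_nsmul_nonneg {a : A} (ha : 0 ≤ a) (n : ℕ) : 0 ≤ n • a := by
  induction n with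
  | zero => simp
  | succ k ih => rw [succ_nsmul]; exact add_nonneg ih ha

lemma fr_nsmul_mono {a b : A} (h : a ≤ b) (n : ℕ) : n • a ≤ n • b := by
  rw [← Nat.cast_smul_eq_nsmul ℝ, ← Nat.cast_smul_eq_nsmul ℝ]
  exact fr_smul_mono (by positivity) h

lemma fr_nsmul_mul (n : ℕ) (a b : A) : (n • a) * b = n • (a * b) := by
  induction n with
  | zero => simp
  | succ k ih => rw [succ_nsmul, succ_nsmul, add_mul, ih]

lemma fr_zsmul_mul (n : ℤ) (a b : A) : (n • a) * b = n • (a * b) := by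
  rw [zsmul_eq_mul, zsmul_eq_mul, mul_assoc]

/-- rational scalars commute with multiplication: `q • y = (q • 1) * y`. -/
lemma fr_rat_smul_mul (q : ℚ) (y : A) : (q : ℝ) • y = ((q : ℝ) • (1 : A)) * y := by
  have hden : ((q.den : ℝ)) * (q : ℝ) = ((q.num : ℝ)) := by
    have : ((q.den : ℚ)) * q = (q.num : ℚ) := Rat.den_mul_eq_num q
    exact_mod_cast congrArg (fun x : ℚ => (x : ℝ)) this
  have hd0 : ((q.den : ℝ)) ≠ 0 := Nat.cast_ne_zero.2 q.den_nz
  have e1 : (q.den : ℝ) • ((q : ℝ) • y) = (q.num : ℝ) • y := by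
    rw [smul_smul, hden]
  have e2 : (q.den : ℝ) • (((q : ℝ) • (1 : A)) * y) = (q.num : ℝ) • y := by
    rw [Nat.cast_smul_eq_nsmul, ← fr_nsmul_mul, ← Nat.cast_smul_eq_nsmul ℝ, smul_smul, hden,
      Int.cast_smul_eq_zsmul, fr_zsmul_mul, one_mul, ← Int.cast_smul_eq_zsmul ℝ]
  have := e1.trans e2.symm
  calc (q : ℝ) • y = ((q.den : ℝ)⁻¹ * (q.den : ℝ)) • ((q : ℝ) • y) := by
        rw [inv_mul_cancel₀ hd0, one_smul]
    _ = (q.den : ℝ)⁻¹ • ((q.den : ℝ) • ((q : ℝ) • y)) := by rw [mul_smul]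
    _ = (q.den : ℝ)⁻¹ • ((q.den : ℝ) • (((q : ℝ) • (1 : A)) * y)) := by rw [this]
    _ = ((q.den : ℝ)⁻¹ * (q.den : ℝ)) • (((q : ℝ) • (1 : A)) * y) := by rw [mul_smul]
    _ = ((q : ℝ) • (1 : A)) * y := by rw [inv_mul_cancel₀ hd0, one_smul]

lemma fr_inf_add_le {a b c : A} (ha : 0 ≤ a) (hb : 0 ≤ b) (hc : 0 ≤ c) :
    (a + b) ⊓ c ≤ a ⊓ c + b ⊓ c := by
  have key : a ⊓ c + b ⊓ c = ((a + b) ⊓ (c + b)) ⊓ ((a + c) ⊓ (c + c)) := by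
    rw [add_inf (b) (c) (a ⊓ c), inf_add, inf_add]
  rw [key]
  refine le_inf (le_inf inf_le_left ?_) (le_inf ?_ ?_)
  · exact le_trans inf_le_right (le_add_of_nonneg_right hb)
  · exact le_trans inf_le_right (le_add_of_nonneg_left ha)
  · exact le_trans inf_le_right (le_add_of_nonneg_right hc)

lemma fr_disj_add {a b c : A} (ha : 0 ≤ a) (hb : 0 ≤ b) (hc : 0 ≤ c)
    (h1 : a ⊓ c = 0) (h2 : b ⊓ c = 0) : (a + b) ⊓ c = 0 := by
  refine le_antisymm ?_ (le_inf (add_nonneg ha hb) hc)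
  calc (a + b) ⊓ c ≤ a ⊓ c + b ⊓ c := fr_inf_add_le ha hb hc
    _ = 0 := by rw [h1, h2, add_zero]

lemma fr_disj_nsmul {u v : A} (hu : 0 ≤ u) (hv : 0 ≤ v) (h : u ⊓ v = 0) (n : ℕ) :
    (n • u) ⊓ v = 0 := by
  induction n with
  | zero => simpa using inf_eq_left.2 hv
  | succ k ih =>
      rw [succ_nsmul]
      exact fr_disj_add (fr_nsmul_nonneg hu k) hu hv ih h

/-- membership helpers -/
lemma fr_neg_mem {E : Set A} (hE : IsRieszSubspace E) {x : A} (hx : x ∈ E) : -x ∈ E := by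
  have := hE.smul_mem (-1) x hx
  rwa [neg_one_smul] at this

lemma fr_sub_mem {E : Set A} (hE : IsRieszSubspace E) {x y : A} (hx : x ∈ E) (hy : y ∈ E) :
    x - y ∈ E := by
  have := hE.add_mem x (-y) hx (fr_neg_mem hE hy)
  rwa [← sub_eq_add_neg] at this

lemma fr_abs_mem {E : Set A} (hE : IsRieszSubspace E) {x : A} (hx : x ∈ E) : |x| ∈ E := by
  have : |x| = x ⊔ -x := rfl
  exact this ▸ hE.abs_mem x hx

lemma fr_posPart_mem {E : Set A} (hE : IsRieszSubspace E) {x : A} (hx : x ∈ E) :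
    x ⊔ 0 ∈ E := by
  have h2 : (2 : ℝ) • (x ⊔ 0) = x + |x| := by
    have hp : x ⊔ 0 = posPart x := (posPart_def x).symm
    have ha : posPart x + negPart x = |x| := posPart_add_negPart x
    have hs : posPart x - negPart x = x := posPart_sub_negPart x
    rw [hp, two_smul]
    calc posPart x + posPart x
        = (posPart x - negPart x) + (posPart x + negPart x) := by ring
      _ = x + |x| := by rw [ha, hs]
  have : x ⊔ 0 = (2 : ℝ)⁻¹ • (x + |x|) := by
    rw [← h2, smul_smul]
    norm_num
  rw [this]
  exact hE.smul_mem _ _ (hE.add_mem _ _ hx (fr_abs_mem hE hx))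

lemma fr_sup_mem {E : Set A} (hE : IsRieszSubspace E) {x y : A} (hx : x ∈ E) (hy : y ∈ E) :
    x ⊔ y ∈ E := by
  have key : x ⊔ y = y + ((x - y) ⊔ 0) := by
    have := sup_eq_add_posPart_sub x y
    rwa [posPart_def] at this
  rw [key]
  exact hE.add_mem _ _ hy (fr_posPart_mem hE (fr_sub_mem hE hx hy))

lemma fr_inf_mem {E : Set A} (hE : IsRieszSubspace E) {x y : A} (hx : x ∈ E) (hy : y ∈ E) :
    x ⊓ y ∈ E := by
  have key : x ⊓ y = x + y - (x ⊔ y) := eq_sub_of_add_eq (inf_add_sup x y)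
  rw [key]
  exact fr_sub_mem hE (hE.add_mem _ _ hx hy) (fr_sup_mem hE hx hy)

/-- Dedekind completeness of `E` gives an Archimedean principle. -/
lemma fr_arch {E : Set A} (hE : IsRieszSubspace E) (hDC : DedekindCompleteIn E)
    {z h : A} (hz : z ∈ E) (hh : h ∈ E) (hh0 : 0 ≤ h)
    (H : ∀ δ : ℝ, 0 < δ → z ≤ δ • h) : z ≤ 0 := by
  set p : A := z ⊔ 0 with hpdef
  have hp_mem : p ∈ E := fr_posPart_mem hE hz
  have hp0 : 0 ≤ p := le_sup_right
  have hzp : z ≤ p := le_sup_left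
  have hpδ : ∀ δ : ℝ, 0 < δ → p ≤ δ • h := fun δ hδ =>
    sup_le (H δ hδ) (fr_smul_nonneg hδ.le hh0)
  set S : Set A := Set.range (fun n : ℕ => (n : ℝ) • p) with hSdef
  have hbound : ∀ n : ℕ, (n : ℝ) • p ≤ h := by
    intro n
    have hδ : (0 : ℝ) < ((n : ℝ) + 1)⁻¹ := by positivity
    calc (n : ℝ) • p ≤ ((n : ℝ) + 1) • p :=
          fr_smul_mono_scalar (by linarith) hp0
      _ ≤ ((n : ℝ) + 1) • (((n : ℝ) + 1)⁻¹ • h) := fr_smul_mono (by positivity) (hpδ _ hδ)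
      _ = h := by rw [smul_smul, mul_inv_cancel₀ (by positivity), one_smul]
  obtain ⟨a, _, hlub⟩ := hDC S
    (by rintro _ ⟨n, rfl⟩; exact hE.smul_mem _ _ hp_mem)
    ⟨p, ⟨1, by simp⟩⟩
    ⟨h, hh, by rintro _ ⟨n, rfl⟩; exact hbound n⟩
  have hub : a - p ∈ upperBounds S := by
    rintro _ ⟨n, rfl⟩
    have h1 : ((n : ℝ) + 1) • p ∈ S := ⟨n + 1, by push_cast; ring_nf⟩
    have h2 : ((n : ℝ) + 1) • p ≤ a := hlub.1 h1
    have h3 : (n : ℝ) • p + p ≤ a := by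
      calc (n : ℝ) • p + p = ((n : ℝ) + 1) • p := by rw [add_smul, one_smul]
        _ ≤ a := h2
    exact le_sub_iff_add_le.2 h3
  have hA : a ≤ a - p := hlub.2 hub
  have hple : p ≤ 0 := by
    have h4 : a + p ≤ a := le_sub_iff_add_le.1 hA
    exact (add_le_iff_nonpos_right a).1 h4
  exact hzp.trans hple

/-- The core pointwise inequality at a rational level `q`. -/
lemma fr_core {f : A} (hf0 : 0 ≤ f) (q : ℚ) (hq : 0 < q) (n : ℕ) :
    ((q : ℝ) ^ 2) • ((1 : A) ⊓ (n • ((f - (q : ℝ) • 1) ⊔ 0))) ≤ f * f := by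
  have one_nn : (0 : A) ≤ 1 := fr_one_nonneg
  set m : A := (q : ℝ) • 1 with hmdef
  have hm0 : 0 ≤ m := fr_smul_nonneg (by exact_mod_cast hq.le) one_nn
  set u : A := (f - m) ⊔ 0 with hudef
  set v : A := (m - f) ⊔ 0 with hvdef
  have hu0 : 0 ≤ u := le_sup_right
  have hv0 : 0 ≤ v := le_sup_right
  have huv : u ⊓ v = 0 := by
    have h1 : u = posPart (f - m) := by rw [posPart_def]
    have h2 : v = negPart (f - m) := by rw [negPart_def, neg_sub]
    rw [h1, h2]
    exact posPart_inf_negPart_eq_zero (f - m)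
  set w : A := (1 : A) ⊓ (n • u) with hwdef
  have hw0 : 0 ≤ w := le_inf one_nn (fr_nsmul_nonneg hu0 n)
  have hw1 : w ≤ 1 := inf_le_left
  have hwv : w ⊓ v = 0 := by
    refine le_antisymm ?_ (le_inf hw0 hv0)
    calc w ⊓ v ≤ (n • u) ⊓ v := inf_le_inf_right v inf_le_right
      _ = 0 := fr_disj_nsmul hu0 hv0 huv n
  have hwv_mul : w * v = 0 := by
    have h1 : (w * v) ⊓ v = 0 := FRieszSpace.inf_mul_orth w v v hv0 hwv
    have h2 : 0 ≤ w * v := fr_mul_nonneg hw0 hv0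
    have h3 : w * v ≤ v := by
      have : 0 ≤ (1 - w) * v := fr_mul_nonneg (sub_nonneg.2 hw1) hv0
      have e : (1 - w) * v = v - w * v := by ring
      rw [e] at this
      exact sub_nonneg.1 this
    have h4 : (w * v) ⊓ v = w * v := inf_eq_left.2 h3
    rw [h4] at h1
    exact h1
  have hmw : m * w ≤ f * w := by
    have h1 : m - f ≤ v := le_sup_left
    have h2 : w * (m - f) ≤ w * v := fr_mul_mono hw0 h1
    rw [hwv_mul] at h2
    have e : w * (m - f) = m * w - f * w := by ring
    rw [e] at h2
    exact sub_nonpos.1 h2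
  have key : m * (m * w) ≤ f * f := by
    calc m * (m * w) ≤ m * (f * w) := fr_mul_mono hm0 hmw
      _ = f * (m * w) := by ring
      _ ≤ f * (f * w) := fr_mul_mono hf0 hmw
      _ = (f * f) * w := by ring
      _ ≤ f * f := by
          have : 0 ≤ (f * f) * (1 - w) := fr_mul_nonneg (fr_mul_nonneg hf0 hf0)
            (sub_nonneg.2 hw1)
          have e : (f * f) * (1 - w) = f * f - (f * f) * w := by ring
          rw [e] at this
          exact sub_nonneg.1 this
  have scal : ((q : ℝ) ^ 2) • w = m * (m * w) := by
    have e1 : (q : ℝ) • w = m * w := by rw [hmdef]; exact fr_rat_smul_mul q w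
    have e2 : (q : ℝ) • (m * w) = m * (m * w) := by rw [hmdef]; exact fr_rat_smul_mul q (m * w)
    calc ((q : ℝ) ^ 2) • w = (q : ℝ) • ((q : ℝ) • w) := by rw [smul_smul, sq]
      _ = (q : ℝ) • (m * w) := by rw [e1]
      _ = m * (m * w) := e2
  rw [scal]
  exact key

end TchebAux

/-- Tchebichev's inequality: `T P_{(f-εe)⁺} e ≤ ε⁻² T(f²)` for `0 ≤ f ∈ L²(T)`. -/
theorem tchebichev {A : Type*} [FRieszSpace A] (E : Set A) (hE : IsRieszSubspace E)
    (hDC : DedekindCompleteIn E)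
    (T : A →ₗ[ℝ] A) (hT : IsCondExpOn E T)
    (f : A) (hf : f ∈ L2 E) (hf0 : 0 ≤ f)
    (ε : ℝ) (hε : 0 < ε)
    (P : A →ₗ[ℝ] A) (hP : IsBandProjOnto P ((f - ε • 1) ⊔ 0)) :
    T (P 1) ≤ (ε ^ 2)⁻¹ • T (f * f) := by
  classical
  obtain ⟨hfE, hffE⟩ := hf
  have one_nn : (0 : A) ≤ 1 := fr_one_nonneg
  have hTmono : ∀ {a b : A}, a ≤ b → T a ≤ T b := by
    intro a b hab
    have := hT.positive _ (sub_nonneg.2 hab)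
    rw [map_sub] at this
    exact sub_nonneg.1 this
  set u : A := (f - ε • 1) ⊔ 0 with hudef
  have hu0 : (0 : A) ≤ u := le_sup_right
  have huE : u ∈ E := fr_posPart_mem hE (fr_sub_mem hE hfE (hE.smul_mem ε 1 hE.one_mem))
  set S : Set A := {y | ∃ n : ℕ, y = (1 : A) ⊓ (n • u)} with hSdef
  have hSne : S.Nonempty := ⟨(1 : A) ⊓ (0 • u), 0, rfl⟩
  have hmono : ∀ {n m : ℕ}, n ≤ m → (1 : A) ⊓ (n • u) ≤ (1 : A) ⊓ (m • u) := by
    intro n m hnm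
    refine inf_le_inf_left 1 ?_
    have e : m • u = n • u + (m - n) • u := by rw [← add_nsmul, Nat.add_sub_cancel' hnm]
    rw [e]
    exact le_add_of_nonneg_right (fr_nsmul_nonneg hu0 _)
  have hdir : DirectedOn (· ≤ ·) S := by
    rintro x ⟨n, rfl⟩ y ⟨m, rfl⟩
    exact ⟨(1 : A) ⊓ ((max n m) • u), ⟨max n m, rfl⟩,
      hmono (le_max_left n m), hmono (le_max_right n m)⟩
  have hLUB : IsLUB S (P 1) := hP.2 1 one_nn
  have hTLUB : IsLUB (T '' S) (T (P 1)) := hT.orderCont S (P 1) hSne hdir hLUB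
  refine hTLUB.2 ?_
  rintro _ ⟨_, ⟨n, rfl⟩, rfl⟩
  set h : A := T (f * f) with hhdef
  have hhE : h ∈ E := hT.mapsTo _ hffE
  have hh0 : (0 : A) ≤ h := hT.positive _ (fr_mul_nonneg hf0 hf0)
  set x : A := (1 : A) ⊓ (n • u) with hxdef
  have hnuE : n • u ∈ E := by
    rw [← Nat.cast_smul_eq_nsmul ℝ]
    exact hE.smul_mem _ _ huE
  have hxE : x ∈ E := fr_inf_mem hE hE.one_mem hnuE
  have hTxE : T x ∈ E := hT.mapsTo x hxE
  have hzE : T x - (ε ^ 2)⁻¹ • h ∈ E := fr_sub_mem hE hTxE (hE.smul_mem _ _ hhE)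
  have key : ∀ δ : ℝ, 0 < δ → T x - (ε ^ 2)⁻¹ • h ≤ δ • h := by
    intro δ hδ
    have hpos : (0 : ℝ) < (ε ^ 2)⁻¹ + δ := by positivity
    set a : ℝ := Real.sqrt (((ε ^ 2)⁻¹ + δ)⁻¹) with hadef
    have ha0 : 0 < a := Real.sqrt_pos.2 (by positivity)
    have ha2 : a ^ 2 = ((ε ^ 2)⁻¹ + δ)⁻¹ := Real.sq_sqrt (by positivity)
    have haε : a < ε := by
      by_contra hcon
      push_neg at hcon
      have h1 : ε ^ 2 ≤ a ^ 2 := pow_le_pow_left₀ hε.le hcon 2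
      rw [ha2] at h1
      have h2 : ((ε ^ 2)⁻¹ + δ)⁻¹ < ε ^ 2 := by
        have h3 : (ε ^ 2)⁻¹ < (ε ^ 2)⁻¹ + δ := by linarith
        have h4 : ((ε ^ 2)⁻¹ + δ)⁻¹ < ((ε ^ 2)⁻¹)⁻¹ := by
          exact inv_strictAnti₀ (by positivity) h3
        rwa [inv_inv] at h4
      linarith
    obtain ⟨q, hq1, hq2⟩ := exists_rat_btwn haε
    have hq0 : 0 < q := by exact_mod_cast lt_trans ha0 hq1
    have hcore := fr_core hf0 q hq0 n
    have hle : u ≤ (f - (q : ℝ) • 1) ⊔ 0 := by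
      refine sup_le_sup_right ?_ 0
      have hq1' : (q : ℝ) • (1 : A) ≤ ε • 1 := fr_smul_mono_scalar hq2.le one_nn
      exact sub_le_sub_left hq1' f
    have hxle : x ≤ (1 : A) ⊓ (n • ((f - (q : ℝ) • 1) ⊔ 0)) :=
      inf_le_inf_left 1 (fr_nsmul_mono hle n)
    have h5 : ((q : ℝ) ^ 2) • x ≤ f * f :=
      le_trans (fr_smul_mono (by positivity) hxle) hcore
    have h6 : ((q : ℝ) ^ 2) • T x ≤ h := by
      have := hTmono h5
      rwa [map_smul] at this
    have hq2pos : (0 : ℝ) < (q : ℝ) ^ 2 := by positivity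
    have h7 : T x ≤ ((q : ℝ) ^ 2)⁻¹ • h := by
      calc T x = ((q : ℝ) ^ 2)⁻¹ • (((q : ℝ) ^ 2) • T x) := by
            rw [smul_smul, inv_mul_cancel₀ (ne_of_gt hq2pos), one_smul]
        _ ≤ ((q : ℝ) ^ 2)⁻¹ • h := fr_smul_mono (by positivity) h6
    have hscal : ((q : ℝ) ^ 2)⁻¹ ≤ (ε ^ 2)⁻¹ + δ := by
      have hlt : a ^ 2 < (q : ℝ) ^ 2 := by
        exact pow_lt_pow_left₀ hq1 ha0.le (by norm_num)
      rw [ha2] at hlt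
      have h8 := inv_strictAnti₀ (by positivity) hlt
      rw [inv_inv] at h8
      exact h8.le
    calc T x - (ε ^ 2)⁻¹ • h ≤ ((q : ℝ) ^ 2)⁻¹ • h - (ε ^ 2)⁻¹ • h :=
          sub_le_sub_right h7 _
      _ = (((q : ℝ) ^ 2)⁻¹ - (ε ^ 2)⁻¹) • h := (sub_smul _ _ h).symm
      _ ≤ δ • h := fr_smul_mono_scalar (by linarith) hh0
  have := fr_arch hE hDC hzE hhE hh0 key
  exact sub_nonpos.1 this
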